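/- Let b : ℝ^d → ℝ^d, σ : ℝ^d → ℝ^{d×m}, H : ℝ^d → ℝ^ϑ and G : ℝ^d → ℝ^{ϑ×m} be measurable, and let Φ : ℝ^d → ℝ^ϑ be twice continuously differentiable with 𝓛₁Φ_i = −H_i for each component i = 1,…,ϑ. Define the ϑ×ϑ matrix field Γ₂(x) := H(x)·Φ(x)ᵀ + 2·G(x)σ(x)ᵀ·(∇Φ(x))ᵀ, i.e. (Γ₂)_{ij}(x) = H_i(x)Φ_j(x) + 2·Σ_k (G(x)σ(x)ᵀ)_{ik}·∂_{x_k}Φ_j(x). Let μ be a probability measure on ℝ^d such that all entries of G·Gᵀ and of Γ₂ are μ-integrable, for every ξ ∈ ℝ^ϑ the function x ↦ |σ(x)ᵀ∇⟨Φ(x), ξ⟩|² is μ-integrable, and for every ξ ∈ ℝ^ϑ the function 𝓛₁(⟨Φ, ξ⟩²) is μ-integrable with ∫ 𝓛₁(⟨Φ, ξ⟩²) dμ = 0. Define the ϑ×ϑ matrix 𝒢 := ∫_{ℝ^d} ( G(x)G(x)ᵀ + (Γ₂(x) + Γ₂(x)ᵀ)/2 ) μ(dx). Then 𝒢 is symmetric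 and for every ξ ∈ ℝ^ϑ, ⟨𝒢ξ, ξ⟩ = ∫_{ℝ^d} |G(x)ᵀξ + σ(x)ᵀ∇⟨Φ(x), ξ⟩|² μ(dx) ≥ 0; in particular 𝒢 is positive semidefinite. -/

import Mathlib

noncomputable section

open MeasureTheory Matrix

/-- The `i`-th standard basis vector of `ℝ^d`. -/
def esingle {d : ℕ} (i : Fin d) : EuclideanSpace ℝ (Fin d) :=
  EuclideanSpace.single i 1

/-- Partial derivative `∂_i ψ(x)`. -/
def pd {d : ℕ} (ψ : EuclideanSpace ℝ (Fin d) → ℝ)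
    (x : EuclideanSpace ℝ (Fin d)) (i : Fin d) : ℝ :=
  fderiv ℝ ψ x (esingle i)

/-- Hessian entry `∂_i ∂_j ψ(x)` as the second iterated Fréchet derivative. -/
def hess2 {d : ℕ} (ψ : EuclideanSpace ℝ (Fin d) → ℝ)
    (x : EuclideanSpace ℝ (Fin d)) (i j : Fin d) : ℝ :=
  iteratedFDeriv ℝ 2 ψ x ![esingle i, esingle j]

/-- The second-order operator
`𝓛₁ψ(x) := tr(σ(x)σ(x)ᵀ · ∇²ψ(x)) + b(x)·∇ψ(x)`. -/
def Lgen {d m : ℕ} (b : EuclideanSpace ℝ (Fin d) → EuclideanSpace ℝ (Fin d))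
    (σ : EuclideanSpace ℝ (Fin d) → Matrix (Fin d) (Fin m) ℝ)
    (ψ : EuclideanSpace ℝ (Fin d) → ℝ) (x : EuclideanSpace ℝ (Fin d)) : ℝ :=
  (∑ i, ∑ j, (σ x * (σ x)ᵀ) i j * hess2 ψ x j i) + ∑ i, b x i * pd ψ x i

/-- The matrix field `Γ₂(x) = H(x)Φ(x)ᵀ + 2 G(x)σ(x)ᵀ (∇Φ(x))ᵀ`, entrywise
`(Γ₂)_{ij}(x) = H_i(x)Φ_j(x) + 2 Σ_k (G(x)σ(x)ᵀ)_{ik} ∂_{x_k}Φ_j(x)`. -/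
def Gamma2 {d m ϑ : ℕ}
    (σ : EuclideanSpace ℝ (Fin d) → Matrix (Fin d) (Fin m) ℝ)
    (H : EuclideanSpace ℝ (Fin d) → EuclideanSpace ℝ (Fin ϑ))
    (G : EuclideanSpace ℝ (Fin d) → Matrix (Fin ϑ) (Fin m) ℝ)
    (Φ : EuclideanSpace ℝ (Fin d) → EuclideanSpace ℝ (Fin ϑ))
    (x : EuclideanSpace ℝ (Fin d)) : Matrix (Fin ϑ) (Fin ϑ) ℝ :=
  Matrix.of fun i j =>
    H x i * Φ x j + 2 * ∑ k, (G x * (σ x)ᵀ) i k * pd (fun z => Φ z j) x k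

/-- The effective diffusion matrix `𝒢 = ∫ ( GGᵀ + (Γ₂ + Γ₂ᵀ)/2 ) dμ` (entrywise). -/
def calG {d m ϑ : ℕ}
    (σ : EuclideanSpace ℝ (Fin d) → Matrix (Fin d) (Fin m) ℝ)
    (H : EuclideanSpace ℝ (Fin d) → EuclideanSpace ℝ (Fin ϑ))
    (G : EuclideanSpace ℝ (Fin d) → Matrix (Fin ϑ) (Fin m) ℝ)
    (Φ : EuclideanSpace ℝ (Fin d) → EuclideanSpace ℝ (Fin ϑ))
    (μ : Measure (EuclideanSpace ℝ (Fin d))) : Matrix (Fin ϑ) (Fin ϑ) ℝ :=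
  Matrix.of fun i j =>
    ∫ x, ((G x * (G x)ᵀ) i j
      + ((Gamma2 σ H G Φ x) i j + (Gamma2 σ H G Φ x) j i) / 2) ∂μ


section Helpers

variable {d : ℕ}

lemma fderiv_differentiable' {f : EuclideanSpace ℝ (Fin d) → ℝ} (hf : ContDiff ℝ 2 f) :
    Differentiable ℝ (fderiv ℝ f) :=
  (hf.fderiv_right (m := 1) (by norm_num)).differentiable one_ne_zero

lemma pd_differentiable' {f : EuclideanSpace ℝ (Fin d) → ℝ} (hf : ContDiff ℝ 2 f) (j : Fin d) :
    Differentiable ℝ (fun y => pd f y j) :=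
  (fderiv_differentiable' hf).clm_apply (differentiable_const _)

lemma hess2_eq' {f : EuclideanSpace ℝ (Fin d) → ℝ} (hf : ContDiff ℝ 2 f)
    (x : EuclideanSpace ℝ (Fin d)) (i j : Fin d) :
    hess2 f x i j = fderiv ℝ (fun y => pd f y j) x (esingle i) := by
  have h := fderiv_clm_apply (𝕜 := ℝ) (fderiv_differentiable' hf x)
      (differentiableAt_const (esingle j))
  simp only [pd]
  rw [hess2, iteratedFDeriv_two_apply, h]
  simp

lemma pd_sq' {g : EuclideanSpace ℝ (Fin d) → ℝ} (hg : ContDiff ℝ 2 g)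
    (x : EuclideanSpace ℝ (Fin d)) (i : Fin d) :
    pd (fun y => g y ^ 2) x i = 2 * g x * pd g x i := by
  have hd : DifferentiableAt ℝ g x := (hg.differentiable two_ne_zero) x
  have : (fun y => g y ^ 2) = fun y => g y * g y := by funext y; ring
  rw [this, pd, fderiv_fun_mul hd hd]
  simp [pd]
  ring

lemma hess2_sq' {g : EuclideanSpace ℝ (Fin d) → ℝ} (hg : ContDiff ℝ 2 g)
    (x : EuclideanSpace ℝ (Fin d)) (i j : Fin d) :
    hess2 (fun y => g y ^ 2) x i j
      = 2 * pd g x i * pd g x j + 2 * g x * hess2 g x i j := by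
  rw [hess2_eq' (hg.pow 2) x i j]
  have h1 : (fun y => pd (fun z => g z ^ 2) y j) = fun y => (2 * g y) * pd g y j := by
    funext y; rw [pd_sq' hg]
  rw [h1]
  have hc : DifferentiableAt ℝ (fun y => 2 * g y) x :=
    ((hg.differentiable two_ne_zero) x).const_mul 2
  have hdd : DifferentiableAt ℝ (fun y => pd g y j) x := pd_differentiable' hg j x
  rw [fderiv_fun_mul hc hdd]
  have h2 : fderiv ℝ (fun y => 2 * g y) x (esingle i) = 2 * pd g x i := by
    rw [fderiv_const_mul ((hg.differentiable two_ne_zero) x)]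
    simp [pd]
  simp only [ContinuousLinearMap.add_apply, ContinuousLinearMap.smul_apply, smul_eq_mul]
  rw [← hess2_eq' hg, h2]
  ring

section psi
variable {ϑ : ℕ} {Φ : EuclideanSpace ℝ (Fin d) → EuclideanSpace ℝ (Fin ϑ)}

lemma contDiff_comp_proj (hΦ : ContDiff ℝ 2 Φ) (l : Fin ϑ) :
    ContDiff ℝ 2 (fun y => Φ y l) :=
  ((EuclideanSpace.proj l : EuclideanSpace ℝ (Fin ϑ) →L[ℝ] ℝ)).contDiff.comp hΦ

lemma contDiff_psi (hΦ : ContDiff ℝ 2 Φ) (ξ : Fin ϑ → ℝ) :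
    ContDiff ℝ 2 (fun y => ∑ l, Φ y l * ξ l) :=
  ContDiff.sum fun l _ => (contDiff_comp_proj hΦ l).mul contDiff_const

lemma pd_psi (hΦ : ContDiff ℝ 2 Φ) (ξ : Fin ϑ → ℝ) (x : EuclideanSpace ℝ (Fin d)) (k : Fin d) :
    pd (fun y => ∑ l, Φ y l * ξ l) x k
      = ∑ l, pd (fun y => Φ y l) x k * ξ l := by
  rw [pd, fderiv_fun_sum (fun l _ =>
    (((contDiff_comp_proj hΦ l).differentiable two_ne_zero) x).mul_const _)]
  rw [ContinuousLinearMap.sum_apply]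
  refine Finset.sum_congr rfl fun l _ => ?_
  rw [fderiv_mul_const (((contDiff_comp_proj hΦ l).differentiable two_ne_zero) x)]
  simp [pd, mul_comm]

lemma hess2_psi (hΦ : ContDiff ℝ 2 Φ) (ξ : Fin ϑ → ℝ) (x : EuclideanSpace ℝ (Fin d))
    (i j : Fin d) :
    hess2 (fun y => ∑ l, Φ y l * ξ l) x i j
      = ∑ l, hess2 (fun y => Φ y l) x i j * ξ l := by
  rw [hess2_eq' (contDiff_psi hΦ ξ) x i j]
  have h1 : (fun y => pd (fun z => ∑ l, Φ z l * ξ l) y j)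
      = fun y => ∑ l, pd (fun z => Φ z l) y j * ξ l := by
    funext y; rw [pd_psi hΦ]
  rw [h1, fderiv_fun_sum (fun l _ =>
    ((pd_differentiable' (contDiff_comp_proj hΦ l) j) x).mul_const _)]
  rw [ContinuousLinearMap.sum_apply]
  refine Finset.sum_congr rfl fun l _ => ?_
  rw [fderiv_mul_const ((pd_differentiable' (contDiff_comp_proj hΦ l) j) x),
    hess2_eq' (contDiff_comp_proj hΦ l) x i j]
  simp [mul_comm]

lemma Lgen_psi (hΦ : ContDiff ℝ 2 Φ) (ξ : Fin ϑ → ℝ) {m : ℕ}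
    (b : EuclideanSpace ℝ (Fin d) → EuclideanSpace ℝ (Fin d))
    (σ : EuclideanSpace ℝ (Fin d) → Matrix (Fin d) (Fin m) ℝ) (x : EuclideanSpace ℝ (Fin d)) :
    Lgen b σ (fun y => ∑ l, Φ y l * ξ l) x
      = ∑ l, Lgen b σ (fun y => Φ y l) x * ξ l := by
  simp only [Lgen, hess2_psi hΦ, pd_psi hΦ, Finset.mul_sum, Finset.sum_mul,
    add_mul, Finset.sum_add_distrib]
  congr 1
  · refine Eq.trans ?_ Finset.sum_comm
    refine Finset.sum_congr rfl fun i _ => ?_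
    refine Eq.trans ?_ Finset.sum_comm
    refine Finset.sum_congr rfl fun j _ => Finset.sum_congr rfl fun l _ => by ring
  · refine Eq.trans ?_ Finset.sum_comm
    refine Finset.sum_congr rfl fun i _ => Finset.sum_congr rfl fun l _ => by ring

end psi

lemma sigma_quad {m : ℕ} (σ : EuclideanSpace ℝ (Fin d) → Matrix (Fin d) (Fin m) ℝ)
    (g : EuclideanSpace ℝ (Fin d) → ℝ) (x : EuclideanSpace ℝ (Fin d)) :
    ∑ i, ∑ j, (σ x * (σ x)ᵀ) i j * (pd g x j * pd g x i)
      = ∑ k, (∑ j, σ x j k * pd g x j) ^ 2 := by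
  have : ∀ k : Fin m, (∑ j, σ x j k * pd g x j) ^ 2
      = ∑ i, ∑ j, (σ x i k * pd g x i) * (σ x j k * pd g x j) := by
    intro k
    rw [sq, Finset.sum_mul_sum Finset.univ Finset.univ
      (fun i => σ x i k * pd g x i) (fun j => σ x j k * pd g x j)]
  simp only [this, Matrix.mul_apply, Matrix.transpose_apply, Finset.sum_mul]
  refine Eq.trans ?_ Finset.sum_comm
  refine Finset.sum_congr rfl fun i _ => ?_
  refine Eq.trans ?_ Finset.sum_comm
  refine Finset.sum_congr rfl fun j _ => Finset.sum_congr rfl fun k _ => by ring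

lemma Lgen_sq {m : ℕ} (b : EuclideanSpace ℝ (Fin d) → EuclideanSpace ℝ (Fin d))
    (σ : EuclideanSpace ℝ (Fin d) → Matrix (Fin d) (Fin m) ℝ)
    {g : EuclideanSpace ℝ (Fin d) → ℝ} (hg : ContDiff ℝ 2 g) (x : EuclideanSpace ℝ (Fin d)) :
    Lgen b σ (fun y => g y ^ 2) x
      = 2 * g x * Lgen b σ g x + 2 * ∑ k, (∑ j, σ x j k * pd g x j) ^ 2 := by
  simp only [Lgen, hess2_sq' hg, pd_sq' hg]
  have h1 : ∑ i, ∑ j, (σ x * (σ x)ᵀ) i j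
        * (2 * pd g x j * pd g x i + 2 * g x * hess2 g x j i)
      = 2 * (∑ i, ∑ j, (σ x * (σ x)ᵀ) i j * (pd g x j * pd g x i))
        + 2 * g x * (∑ i, ∑ j, (σ x * (σ x)ᵀ) i j * hess2 g x j i) := by
    simp only [Finset.mul_sum, ← Finset.sum_add_distrib]
    refine Finset.sum_congr rfl fun i _ => Finset.sum_congr rfl fun j _ => by ring
  have h2 : ∑ i, b x i * (2 * g x * pd g x i)
      = 2 * g x * ∑ i, b x i * pd g x i := by
    rw [Finset.mul_sum]; exact Finset.sum_congr rfl fun i _ => by ring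
  rw [h1, h2, sigma_quad σ g x]
  ring

lemma quad_G {ϑ m' : ℕ} (M : Matrix (Fin ϑ) (Fin m') ℝ) (ξ : Fin ϑ → ℝ) :
    ∑ i, (∑ j, (M * Mᵀ) i j * ξ j) * ξ i = ∑ k, (∑ i, M i k * ξ i) ^ 2 := by
  have : ∀ k : Fin m', (∑ i, M i k * ξ i) ^ 2
      = ∑ i, ∑ j, (M i k * ξ i) * (M j k * ξ j) := by
    intro k
    rw [sq, Finset.sum_mul_sum Finset.univ Finset.univ
      (fun i => M i k * ξ i) (fun j => M j k * ξ j)]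
  simp only [this, Matrix.mul_apply, Matrix.transpose_apply, Finset.sum_mul]
  refine Eq.trans ?_ Finset.sum_comm
  refine Finset.sum_congr rfl fun i _ => ?_
  refine Eq.trans ?_ Finset.sum_comm
  refine Finset.sum_congr rfl fun j _ => Finset.sum_congr rfl fun k _ => by ring

lemma quad_sym {ϑ : ℕ} (Γ : Matrix (Fin ϑ) (Fin ϑ) ℝ) (ξ : Fin ϑ → ℝ) :
    ∑ i, (∑ j, ((Γ i j + Γ j i) / 2) * ξ j) * ξ i
      = ∑ i, (∑ j, Γ i j * ξ j) * ξ i := by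
  have hsym : ∑ i, ∑ j, Γ j i * ξ j * ξ i = ∑ i, ∑ j, Γ i j * ξ j * ξ i := by
    refine Eq.trans Finset.sum_comm ?_
    exact Finset.sum_congr rfl fun i _ => Finset.sum_congr rfl fun j _ => by ring
  have expand : ∀ i j, ((Γ i j + Γ j i) / 2 * ξ j) * ξ i
      = (Γ i j * ξ j * ξ i) / 2 + (Γ j i * ξ j * ξ i) / 2 := fun i j => by ring
  simp only [Finset.sum_mul, expand, Finset.sum_add_distrib, ← Finset.sum_div, hsym]
  refine Eq.trans (by ring) ?_
  refine Finset.sum_congr rfl fun i _ => Finset.sum_congr rfl fun j _ => by ring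

lemma quad_Gam {d m ϑ : ℕ}
    (σ : EuclideanSpace ℝ (Fin d) → Matrix (Fin d) (Fin m) ℝ)
    (H : EuclideanSpace ℝ (Fin d) → EuclideanSpace ℝ (Fin ϑ))
    (G : EuclideanSpace ℝ (Fin d) → Matrix (Fin ϑ) (Fin m) ℝ)
    {Φ : EuclideanSpace ℝ (Fin d) → EuclideanSpace ℝ (Fin ϑ)} (hΦ : ContDiff ℝ 2 Φ)
    (ξ : Fin ϑ → ℝ) (x : EuclideanSpace ℝ (Fin d)) :
    ∑ i, (∑ j, Gamma2 σ H G Φ x i j * ξ j) * ξ i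
      = (∑ i, Φ x i * ξ i) * (∑ l, H x l * ξ l)
        + 2 * ∑ k, (∑ i, G x i k * ξ i)
            * (∑ j, σ x j k * pd (fun z => ∑ i, Φ z i * ξ i) x j) := by
  have hrow : ∀ i, (∑ j, Gamma2 σ H G Φ x i j * ξ j)
      = H x i * (∑ l, Φ x l * ξ l)
        + 2 * ∑ k, (G x * (σ x)ᵀ) i k * pd (fun z => ∑ l, Φ z l * ξ l) x k := by
    intro i
    simp only [Gamma2, Matrix.of_apply, add_mul, Finset.sum_add_distrib]
    congr 1
    · rw [Finset.mul_sum]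
      exact Finset.sum_congr rfl fun j _ => by ring
    · simp only [pd_psi hΦ, Finset.mul_sum, Finset.sum_mul]
      refine Eq.trans Finset.sum_comm ?_
      refine Finset.sum_congr rfl fun k _ => Finset.sum_congr rfl fun j _ => by ring
  simp only [hrow, add_mul, Finset.sum_add_distrib]
  congr 1
  · rw [Finset.mul_sum]
    exact Finset.sum_congr rfl fun i _ => by ring
  · simp only [Matrix.mul_apply, Matrix.transpose_apply, Finset.mul_sum, Finset.sum_mul]
    refine Eq.trans (Finset.sum_congr rfl fun i _ => Finset.sum_comm) ?_
    refine Eq.trans Finset.sum_comm ?_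
    refine Finset.sum_congr rfl fun l _ => ?_
    refine Eq.trans ?_ Finset.sum_comm
    refine Finset.sum_congr rfl fun i _ => Finset.sum_congr rfl fun k _ => by ring

lemma pointwise_key {d m ϑ : ℕ}
    (σ : EuclideanSpace ℝ (Fin d) → Matrix (Fin d) (Fin m) ℝ)
    (H : EuclideanSpace ℝ (Fin d) → EuclideanSpace ℝ (Fin ϑ))
    (G : EuclideanSpace ℝ (Fin d) → Matrix (Fin ϑ) (Fin m) ℝ)
    {Φ : EuclideanSpace ℝ (Fin d) → EuclideanSpace ℝ (Fin ϑ)} (hΦ : ContDiff ℝ 2 Φ)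
    (ξ : Fin ϑ → ℝ) (x : EuclideanSpace ℝ (Fin d)) :
    ∑ k, ((∑ i, G x i k * ξ i)
        + ∑ j, σ x j k * pd (fun z => ∑ i, Φ z i * ξ i) x j) ^ 2
      = (∑ i, (∑ j, ((G x * (G x)ᵀ) i j
            + ((Gamma2 σ H G Φ x) i j + (Gamma2 σ H G Φ x) j i) / 2) * ξ j) * ξ i)
        - (∑ i, Φ x i * ξ i) * (∑ l, H x l * ξ l)
        + ∑ k, (∑ j, σ x j k * pd (fun z => ∑ i, Φ z i * ξ i) x j) ^ 2 := by
  have hsplit : (∑ i, (∑ j, ((G x * (G x)ᵀ) i j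
          + ((Gamma2 σ H G Φ x) i j + (Gamma2 σ H G Φ x) j i) / 2) * ξ j) * ξ i)
      = (∑ i, (∑ j, (G x * (G x)ᵀ) i j * ξ j) * ξ i)
        + ∑ i, (∑ j, ((Gamma2 σ H G Φ x i j + Gamma2 σ H G Φ x j i) / 2) * ξ j) * ξ i := by
    simp only [add_mul, Finset.sum_add_distrib]
  rw [hsplit, quad_G, quad_sym, quad_Gam σ H G hΦ ξ x]
  have expand : ∀ k : Fin m, ((∑ i, G x i k * ξ i)
        + ∑ j, σ x j k * pd (fun z => ∑ i, Φ z i * ξ i) x j) ^ 2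
      = (∑ i, G x i k * ξ i) ^ 2
        + (2 * ((∑ i, G x i k * ξ i)
            * (∑ j, σ x j k * pd (fun z => ∑ i, Φ z i * ξ i) x j))
          + (∑ j, σ x j k * pd (fun z => ∑ i, Φ z i * ξ i) x j) ^ 2) := fun k => by ring
  simp only [expand, Finset.sum_add_distrib, ← Finset.mul_sum]
  ring

end Helpers

/-- The effective diffusion matrix `𝒢` is symmetric and positive semidefinite, with
`⟨𝒢ξ, ξ⟩ = ∫ |Gᵀξ + σᵀ∇⟨Φ, ξ⟩|² dμ`. -/
theorem calG_posSemidef {d m ϑ : ℕ}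
    (b : EuclideanSpace ℝ (Fin d) → EuclideanSpace ℝ (Fin d))
    (σ : EuclideanSpace ℝ (Fin d) → Matrix (Fin d) (Fin m) ℝ)
    (H : EuclideanSpace ℝ (Fin d) → EuclideanSpace ℝ (Fin ϑ))
    (G : EuclideanSpace ℝ (Fin d) → Matrix (Fin ϑ) (Fin m) ℝ)
    (hb : Measurable b) (hσ : ∀ i j, Measurable fun x => σ x i j)
    (hH : Measurable H) (hG : ∀ i j, Measurable fun x => G x i j)
    (Φ : EuclideanSpace ℝ (Fin d) → EuclideanSpace ℝ (Fin ϑ))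
    (hΦ : ContDiff ℝ 2 Φ)
    (hcell : ∀ (i : Fin ϑ) (x : EuclideanSpace ℝ (Fin d)),
      Lgen b σ (fun y => Φ y i) x = -(H x i))
    (μ : Measure (EuclideanSpace ℝ (Fin d))) [IsProbabilityMeasure μ]
    (hintG : ∀ i j : Fin ϑ, Integrable (fun x => (G x * (G x)ᵀ) i j) μ)
    (hintΓ : ∀ i j : Fin ϑ, Integrable (fun x => (Gamma2 σ H G Φ x) i j) μ)
    (hintσ : ∀ ξ : Fin ϑ → ℝ, Integrable
      (fun x => ∑ k, (∑ j, σ x j k * pd (fun z => ∑ i, Φ z i * ξ i) x j) ^ 2) μ)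
    (hintL : ∀ ξ : Fin ϑ → ℝ, Integrable
      (fun x => Lgen b σ (fun y => (∑ i, Φ y i * ξ i) ^ 2) x) μ)
    (hzero : ∀ ξ : Fin ϑ → ℝ,
      ∫ x, Lgen b σ (fun y => (∑ i, Φ y i * ξ i) ^ 2) x ∂μ = 0) :
    (calG σ H G Φ μ)ᵀ = calG σ H G Φ μ ∧
    ∀ ξ : Fin ϑ → ℝ,
      (∑ i, (∑ j, calG σ H G Φ μ i j * ξ j) * ξ i)
        = ∫ x, ∑ k, ((∑ i, G x i k * ξ i)
            + ∑ j, σ x j k * pd (fun z => ∑ i, Φ z i * ξ i) x j) ^ 2 ∂μ ∧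
      0 ≤ ∑ i, (∑ j, calG σ H G Φ μ i j * ξ j) * ξ i  := by
  constructor
  · ext i j
    simp only [Matrix.transpose_apply, calG, Matrix.of_apply]
    refine integral_congr_ae (Filter.Eventually.of_forall fun x => ?_)
    dsimp only
    have hGG : (G x * (G x)ᵀ) j i = (G x * (G x)ᵀ) i j := by
      simp only [Matrix.mul_apply, Matrix.transpose_apply]
      exact Finset.sum_congr rfl fun k _ => mul_comm _ _
    rw [hGG]; ring
  · intro ξ
    have hψ : ContDiff ℝ 2 (fun y => ∑ i, Φ y i * ξ i) := contDiff_psi hΦ ξ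
    have hLψ : ∀ x, Lgen b σ (fun y => ∑ i, Φ y i * ξ i) x = -(∑ l, H x l * ξ l) := by
      intro x
      rw [Lgen_psi hΦ ξ b σ x]
      simp [hcell, neg_mul]
    have hLsq : ∀ x, Lgen b σ (fun y => (∑ i, Φ y i * ξ i) ^ 2) x
        = -2 * ((∑ i, Φ x i * ξ i) * (∑ l, H x l * ξ l))
          + 2 * ∑ k, (∑ j, σ x j k * pd (fun z => ∑ i, Φ z i * ξ i) x j) ^ 2 := by
      intro x
      rw [Lgen_sq b σ hψ x, hLψ x]
      ring
    have hQint : Integrable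
        (fun x => ∑ k, (∑ j, σ x j k * pd (fun z => ∑ i, Φ z i * ξ i) x j) ^ 2) μ :=
      hintσ ξ
    have hFeq : (fun x => (∑ i, Φ x i * ξ i) * (∑ l, H x l * ξ l))
        = fun x => (∑ k, (∑ j, σ x j k * pd (fun z => ∑ i, Φ z i * ξ i) x j) ^ 2)
            - Lgen b σ (fun y => (∑ i, Φ y i * ξ i) ^ 2) x / 2 := by
      funext x; rw [hLsq x]; ring
    have hFint : Integrable (fun x => (∑ i, Φ x i * ξ i) * (∑ l, H x l * ξ l)) μ := by
      rw [hFeq]; exact hQint.sub ((hintL ξ).div_const 2)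
    have hFQ : ∫ x, (∑ i, Φ x i * ξ i) * (∑ l, H x l * ξ l) ∂μ
        = ∫ x, ∑ k, (∑ j, σ x j k * pd (fun z => ∑ i, Φ z i * ξ i) x j) ^ 2 ∂μ := by
      rw [hFeq, integral_sub hQint ((hintL ξ).div_const 2)]
      have : ∫ x, Lgen b σ (fun y => (∑ i, Φ y i * ξ i) ^ 2) x / 2 ∂μ = 0 := by
        rw [integral_div, hzero ξ]; simp
      rw [this]; ring
    have gint : ∀ i j : Fin ϑ, Integrable (fun x => (G x * (G x)ᵀ) i j
        + ((Gamma2 σ H G Φ x) i j + (Gamma2 σ H G Φ x) j i) / 2) μ :=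
      fun i j => (hintG i j).add (((hintΓ i j).add (hintΓ j i)).div_const 2)
    have hTint : Integrable (fun x => ∑ i, (∑ j, ((G x * (G x)ᵀ) i j
        + ((Gamma2 σ H G Φ x) i j + (Gamma2 σ H G Φ x) j i) / 2) * ξ j) * ξ i) μ :=
      integrable_finset_sum _ fun i _ =>
        (integrable_finset_sum _ fun j _ => (gint i j).mul_const _).mul_const _
    have hLHS : (∑ i, (∑ j, calG σ H G Φ μ i j * ξ j) * ξ i)
        = ∫ x, ∑ i, (∑ j, ((G x * (G x)ᵀ) i j
            + ((Gamma2 σ H G Φ x) i j + (Gamma2 σ H G Φ x) j i) / 2) * ξ j) * ξ i ∂μ := by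
      rw [integral_finset_sum _ (fun i _ =>
        (integrable_finset_sum _ fun j _ => (gint i j).mul_const _).mul_const _)]
      refine Finset.sum_congr rfl fun i _ => ?_
      rw [integral_mul_const, integral_finset_sum _ (fun j _ => (gint i j).mul_const _)]
      congr 1
      refine Finset.sum_congr rfl fun j _ => ?_
      rw [integral_mul_const]
      rfl
    have heq : (∑ i, (∑ j, calG σ H G Φ μ i j * ξ j) * ξ i)
        = ∫ x, ∑ k, ((∑ i, G x i k * ξ i)
            + ∑ j, σ x j k * pd (fun z => ∑ i, Φ z i * ξ i) x j) ^ 2 ∂μ := by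
      rw [hLHS]
      have h1 : ∫ x, ∑ k, ((∑ i, G x i k * ξ i)
            + ∑ j, σ x j k * pd (fun z => ∑ i, Φ z i * ξ i) x j) ^ 2 ∂μ
          = ∫ x, ((∑ i, (∑ j, ((G x * (G x)ᵀ) i j
              + ((Gamma2 σ H G Φ x) i j + (Gamma2 σ H G Φ x) j i) / 2) * ξ j) * ξ i)
            - (∑ i, Φ x i * ξ i) * (∑ l, H x l * ξ l))
            + ∑ k, (∑ j, σ x j k * pd (fun z => ∑ i, Φ z i * ξ i) x j) ^ 2 ∂μ := by
        refine integral_congr_ae (Filter.Eventually.of_forall fun x => ?_)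
        dsimp only
        rw [pointwise_key σ H G hΦ ξ x]
      have hTFint : Integrable (fun x =>
          (∑ i, (∑ j, ((G x * (G x)ᵀ) i j
            + ((Gamma2 σ H G Φ x) i j + (Gamma2 σ H G Φ x) j i) / 2) * ξ j) * ξ i)
          - (∑ i, Φ x i * ξ i) * (∑ l, H x l * ξ l)) μ := hTint.sub hFint
      rw [h1, integral_add hTFint hQint, integral_sub hTint hFint, hFQ]
      ring
    exact ⟨heq, heq ▸ integral_nonneg fun x =>
      Finset.sum_nonneg fun k _ => sq_nonneg _⟩
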